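/- Suppose β ∈ [0, 1] and P, Γ, Θ are symmetric positive semidefinite. Then for every x ∈ T̂_LQR, m(x) = xᵀPx. (Proposition 2, statement 4: the terminal cost coincides with the LQR quadratic value function on T̂_LQR.) -/

import Mathlib

open Matrix

noncomputable section

variable {n nu nf ne nv : ℕ}

/-- The polytope `P(y) = {x | F x ≤ y}` (entrywise inequalities). -/
def polySet (F : Matrix (Fin nf) (Fin n) ℝ) (y : Fin nf → ℝ) : Set (Fin n → ℝ) :=
  {x | F *ᵥ x ≤ y}

/-- The set `S` of triples `(y, v, y⁺)` from the paper. -/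
def STriple (A : Matrix (Fin n) (Fin n) ℝ) (B : Matrix (Fin n) (Fin nu) ℝ)
    (X : Set (Fin n → ℝ)) (U : Set (Fin nu → ℝ))
    (F : Matrix (Fin nf) (Fin n) ℝ) (E : Matrix (Fin ne) (Fin nf) ℝ)
    (V : Fin nv → Matrix (Fin n) (Fin nf) ℝ) :
    Set ((Fin nf → ℝ) × (Fin nv → Fin nu → ℝ) × (Fin nf → ℝ)) :=
  {p | E *ᵥ p.1 ≤ 0 ∧ ∀ i : Fin nv,
      F *ᵥ (A *ᵥ ((V i) *ᵥ p.1) + B *ᵥ (p.2.1 i)) ≤ p.2.2 ∧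
      (V i) *ᵥ p.1 ∈ X ∧ p.2.1 i ∈ U}

/-- The set `Y_LQR` of parameters of invariant cc-polytopes for the LQR feedback. -/
def YLQR (A : Matrix (Fin n) (Fin n) ℝ) (B : Matrix (Fin n) (Fin nu) ℝ)
    (K : Matrix (Fin nu) (Fin n) ℝ)
    (X : Set (Fin n → ℝ)) (U : Set (Fin nu → ℝ))
    (F : Matrix (Fin nf) (Fin n) ℝ) (E : Matrix (Fin ne) (Fin nf) ℝ)
    (V : Fin nv → Matrix (Fin n) (Fin nf) ℝ) : Set (Fin nf → ℝ) :=
  {ys | E *ᵥ ys ≤ 0 ∧ ∀ i : Fin nv,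
      F *ᵥ ((A + B * K) *ᵥ ((V i) *ᵥ ys)) ≤ ys ∧
      (V i) *ᵥ ys ∈ X ∧ K *ᵥ ((V i) *ᵥ ys) ∈ U}

/-- The terminal region `T(β)`. -/
def TSet (β : ℝ) (A : Matrix (Fin n) (Fin n) ℝ) (B : Matrix (Fin n) (Fin nu) ℝ)
    (K : Matrix (Fin nu) (Fin n) ℝ)
    (X : Set (Fin n → ℝ)) (U : Set (Fin nu → ℝ))
    (F : Matrix (Fin nf) (Fin n) ℝ) (E : Matrix (Fin ne) (Fin nf) ℝ)
    (V : Fin nv → Matrix (Fin n) (Fin nf) ℝ) : Set (Fin n → ℝ) :=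
  {x | ∃ (y ys : Fin nf → ℝ) (vv : Fin nv → Fin nu → ℝ),
      F *ᵥ x ≤ y ∧ ys ∈ YLQR A B K X U F E V ∧
      (y, vv, ys + β • (y - ys)) ∈ STriple A B X U F E V}

/-- The set `T̂_LQR`, the union of all invariant cc-polytopes for the LQR feedback. -/
def THatLQR (A : Matrix (Fin n) (Fin n) ℝ) (B : Matrix (Fin n) (Fin nu) ℝ)
    (K : Matrix (Fin nu) (Fin n) ℝ)
    (X : Set (Fin n → ℝ)) (U : Set (Fin nu → ℝ))
    (F : Matrix (Fin nf) (Fin n) ℝ) (E : Matrix (Fin ne) (Fin nf) ℝ)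
    (V : Fin nv → Matrix (Fin n) (Fin nf) ℝ) : Set (Fin n → ℝ) :=
  {x | ∃ ys ∈ YLQR A B K X U F E V, F *ᵥ x ≤ ys}

/-- The piecewise quadratic terminal cost `m(x)`, as an infimum in `ℝ ∪ {±∞}`
(the infimum over the empty set is `+∞`). -/
def mcost (β : ℝ) (A : Matrix (Fin n) (Fin n) ℝ) (B : Matrix (Fin n) (Fin nu) ℝ)
    (K : Matrix (Fin nu) (Fin n) ℝ)
    (X : Set (Fin n → ℝ)) (U : Set (Fin nu → ℝ))
    (F : Matrix (Fin nf) (Fin n) ℝ) (E : Matrix (Fin ne) (Fin nf) ℝ)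
    (V : Fin nv → Matrix (Fin n) (Fin nf) ℝ)
    (P : Matrix (Fin n) (Fin n) ℝ) (Γ : Matrix (Fin nf) (Fin nf) ℝ)
    (Θ : Matrix (Fin nu) (Fin nu) ℝ) (x : Fin n → ℝ) : EReal :=
  sInf {c : EReal | ∃ (y ys : Fin nf → ℝ) (vv : Fin nv → Fin nu → ℝ),
    F *ᵥ x ≤ y ∧ ys ∈ YLQR A B K X U F E V ∧
    (y, vv, ys + β • (y - ys)) ∈ STriple A B X U F E V ∧
    c = ((x ⬝ᵥ (P *ᵥ x) + (y - ys) ⬝ᵥ (Γ *ᵥ (y - ys)) +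
      ∑ i : Fin nv, ((vv i - K *ᵥ ((V i) *ᵥ y)) ⬝ᵥ
        (Θ *ᵥ (vv i - K *ᵥ ((V i) *ᵥ y)))) : ℝ) : EReal)}

/-- The quadratic stage cost `ℓ(x,u) = xᵀQx + 2xᵀSu + uᵀRu`. -/
def stageCost (Q : Matrix (Fin n) (Fin n) ℝ) (Sm : Matrix (Fin n) (Fin nu) ℝ)
    (R : Matrix (Fin nu) (Fin nu) ℝ) (x : Fin n → ℝ) (u : Fin nu → ℝ) : ℝ :=
  x ⬝ᵥ (Q *ᵥ x) + 2 * (x ⬝ᵥ (Sm *ᵥ u)) + u ⬝ᵥ (R *ᵥ u)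

/-- `(P, K)` is a Riccati pair: `P` symmetric, the LQR gain relation, and the DARE. -/
def IsRiccatiPair (A : Matrix (Fin n) (Fin n) ℝ) (B : Matrix (Fin n) (Fin nu) ℝ)
    (Q : Matrix (Fin n) (Fin n) ℝ) (Sm : Matrix (Fin n) (Fin nu) ℝ)
    (R : Matrix (Fin nu) (Fin nu) ℝ)
    (P : Matrix (Fin n) (Fin n) ℝ) (K : Matrix (Fin nu) (Fin n) ℝ) : Prop :=
  P.IsSymm ∧ (R + Bᵀ * P * B) * K = -(Aᵀ * P * B + Sm)ᵀ ∧
    P = Aᵀ * P * A + Q + (Aᵀ * P * B + Sm) * K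

/-- on `T̂_LQR` the terminal cost equals the LQR quadratic value
function (Proposition 2, statement 4). -/
theorem mcost_eq_quadratic_on_THatLQR
    (A : Matrix (Fin n) (Fin n) ℝ) (B : Matrix (Fin n) (Fin nu) ℝ)
    (K : Matrix (Fin nu) (Fin n) ℝ)
    (X : Set (Fin n → ℝ)) (U : Set (Fin nu → ℝ))
    (F : Matrix (Fin nf) (Fin n) ℝ) (E : Matrix (Fin ne) (Fin nf) ℝ)
    (V : Fin nv → Matrix (Fin n) (Fin nf) ℝ)
    (P : Matrix (Fin n) (Fin n) ℝ) (Γ : Matrix (Fin nf) (Fin nf) ℝ)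
    (Θ : Matrix (Fin nu) (Fin nu) ℝ)
    (β : ℝ) (hβ0 : 0 ≤ β) (hβ1 : β ≤ 1)
    (hP : P.PosSemidef) (hΓ : Γ.PosSemidef) (hΘ : Θ.PosSemidef) :
    ∀ x ∈ THatLQR A B K X U F E V,
      mcost β A B K X U F E V P Γ Θ x = ((x ⬝ᵥ (P *ᵥ x) : ℝ) : EReal) := by
  rintro x ⟨ys, hys, hFx⟩
  apply le_antisymm
  · apply sInf_le
    refine ⟨ys, ys, fun i => K *ᵥ ((V i) *ᵥ ys), hFx, hys, ?_, ?_⟩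
    · obtain ⟨hE, hInv⟩ := hys
      refine ⟨hE, fun i => ?_⟩
      have h := hInv i
      have hrw : A *ᵥ ((V i) *ᵥ ys) + B *ᵥ (K *ᵥ ((V i) *ᵥ ys))
          = (A + B * K) *ᵥ ((V i) *ᵥ ys) := by
        simp [Matrix.add_mulVec, Matrix.mulVec_mulVec, Matrix.add_mul, Matrix.mul_assoc]
      rw [hrw]
      refine ⟨?_, h.2.1, h.2.2⟩
      simpa using h.1
    · simp
  · refine le_sInf ?_
    rintro c ⟨y, ys', vv, hFy, hys', hS, rfl⟩
    have hΓ' : 0 ≤ (y - ys') ⬝ᵥ (Γ *ᵥ (y - ys')) := by simpa using hΓ.dotProduct_mulVec_nonneg (y - ys')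
    have hΘ' : 0 ≤ ∑ i : Fin nv, ((vv i - K *ᵥ ((V i) *ᵥ y)) ⬝ᵥ
        (Θ *ᵥ (vv i - K *ᵥ ((V i) *ᵥ y)))) :=
      Finset.sum_nonneg fun i _ => by simpa only [star_trivial] using hΘ.dotProduct_mulVec_nonneg (vv i - K *ᵥ ((V i) *ᵥ y))
    exact_mod_cast by linarith
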